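/- If E is a bisimulation relation on a finite MDP (i.e., whenever (s,t) ∈ E: for all a, R(s,a) = R(t,a) and P(s,a)(C) = P(t,a)(C) for every E-equivalence class C), then for any two E-related states s and t, V*(s) = V*(t). -/

import Mathlib

open Finset

def IsProb {S : Type*} [Fintype S] (μ : S → ℝ) : Prop :=
  (∀ s, 0 ≤ μ s) ∧ ∑ s, μ s = 1

def IsCoupling {S : Type*} [Fintype S] (l : S → S → ℝ) (μ ν : S → ℝ) : Prop :=
  (∀ s t, 0 ≤ l s t) ∧ (∀ s, ∑ t, l s t = μ s) ∧ (∀ t, ∑ s, l s t = ν t)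

noncomputable def W1 {S : Type*} [Fintype S] (d : S → S → ℝ) (μ ν : S → ℝ) : ℝ :=
  sInf {c | ∃ l, IsCoupling l μ ν ∧ c = ∑ s, ∑ t, l s t * d s t}

def IsPseudometric {S : Type*} (d : S → S → ℝ) : Prop :=
  (∀ s t, 0 ≤ d s t) ∧ (∀ s, d s s = 0) ∧ (∀ s t, d s t = d t s) ∧
    (∀ s t u, d s u ≤ d s t + d t u)

noncomputable def bisimF {S A : Type*} [Fintype S] [Fintype A] [Nonempty A]
    (R : S → A → ℝ) (P : S → A → S → ℝ) (γ : ℝ) (d : S → S → ℝ) : S → S → ℝ :=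
  fun s t => univ.sup' univ_nonempty
    (fun a => |R s a - R t a| + γ * W1 d (P s a) (P t a))

noncomputable def supDist {S : Type*} [Fintype S] [Nonempty S]
    (d d' : S → S → ℝ) : ℝ :=
  univ.sup' univ_nonempty (fun p : S × S => |d p.1 p.2 - d' p.1 p.2|)

def Rpi {S A : Type*} [Fintype A] (R : S → A → ℝ) (pol : S → A → ℝ) (s : S) : ℝ :=
  ∑ a, pol s a * R s a

def Ppi {S A : Type*} [Fintype A] (P : S → A → S → ℝ) (pol : S → A → ℝ)
    (s s' : S) : ℝ :=
  ∑ a, pol s a * P s a s'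

noncomputable def piF {S A : Type*} [Fintype S] [Fintype A]
    (R : S → A → ℝ) (P : S → A → S → ℝ) (pol : S → A → ℝ) (γ : ℝ)
    (d : S → S → ℝ) : S → S → ℝ :=
  fun s t => |Rpi R pol s - Rpi R pol t| + γ * W1 d (Ppi P pol s) (Ppi P pol t)

theorem bisimulation_relation_implies_equal_optimal_values
    {S A : Type*} [Fintype S] [Fintype A] [Nonempty S] [Nonempty A]
    (R : S → A → ℝ) (P : S → A → S → ℝ) (hP : ∀ s a, IsProb (P s a))
    (γ : ℝ) (hγ0 : 0 ≤ γ) (hγ1 : γ < 1)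
    (E : S → S → Prop) (hE : Equivalence E)
    (hR : ∀ s t, E s t → ∀ a, R s a = R t a)
    (hPr : ∀ s t, E s t → ∀ a (u : S),
      ∑ s', Set.indicator {x | E u x} (P s a) s' =
      ∑ s', Set.indicator {x | E u x} (P t a) s')
    (V : S → ℝ)
    (hV : ∀ s, V s = univ.sup' univ_nonempty
      (fun a => R s a + γ * ∑ s', P s a s' * V s')) :
    ∀ s t, E s t → V s = V t := by
  classical
  intro s₀ t₀ hst₀
  letI st : Setoid S := ⟨E, hE⟩
  set D : ℝ := univ.sup' univ_nonempty
    (fun p : S × S => if E p.1 p.2 then |V p.1 - V p.2| else 0) with hD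
  have hD0 : 0 ≤ D := by
    have h := Finset.le_sup' (fun p : S × S => if E p.1 p.2 then |V p.1 - V p.2| else 0)
      (Finset.mem_univ (s₀, s₀))
    simp [hE.refl] at h
    simpa using h
  have hDle : ∀ u v, E u v → |V u - V v| ≤ D := by
    intro u v huv
    have h := Finset.le_sup' (fun p : S × S => if E p.1 p.2 then |V p.1 - V p.2| else 0)
      (Finset.mem_univ (u, v))
    simpa [huv] using h
  -- key sum lemma
  have hsum : ∀ u v, E u v → ∀ a,
      (∑ s', P u a s' * V s') - (∑ s', P v a s' * V s') ≤ D := by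
    intro u v huv a
    have hfib : ∀ f : S → ℝ,
        ∑ q : Quotient st, ∑ x ∈ univ.filter (fun x => Quotient.mk st x = q), f x
          = ∑ x, f x := by
      intro f
      exact Finset.sum_fiberwise_of_maps_to (fun x _ => Finset.mem_univ _) f
    have key : ∀ q : Quotient st,
        (∑ x ∈ univ.filter (fun x => Quotient.mk st x = q), P u a x * V x)
        - (∑ x ∈ univ.filter (fun x => Quotient.mk st x = q), P v a x * V x)
        ≤ D * ∑ x ∈ univ.filter (fun x => Quotient.mk st x = q), P v a x := by
      intro q
      set C := univ.filter (fun x => Quotient.mk st x = q) with hC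
      have hCne : C.Nonempty := ⟨q.out, by simp [hC, Quotient.out_eq]⟩
      obtain ⟨w, hwC, hwmax⟩ := C.exists_max_image V hCne
      have hwq : Quotient.mk st w = q := (Finset.mem_filter.mp hwC).2
      have hmem : ∀ x ∈ C, E w x := by
        intro x hx
        have h2 : Quotient.mk st x = q := (Finset.mem_filter.mp hx).2
        exact Quotient.eq.mp (hwq.trans h2.symm)
      have hCeq : ∀ z : S, (∑ s', Set.indicator {x | E w x} (P z a) s') = ∑ x ∈ C, P z a x := by
        intro z
        rw [Finset.sum_filter]
        apply Finset.sum_congr rfl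
        intro x _
        by_cases hx : Quotient.mk st x = q
        · have hEwx : E w x := Quotient.eq.mp (hwq.trans hx.symm)
          simp [Set.indicator_apply, hEwx, hx]
        · have hEwx : ¬ E w x := by
            intro hc
            exact hx (((Quotient.eq (r := st)).mpr hc).symm.trans hwq)
          simp [Set.indicator_apply, hEwx, hx]
      have hmass : ∑ x ∈ C, P u a x = ∑ x ∈ C, P v a x := by
        rw [← hCeq u, ← hCeq v]
        exact hPr u v huv a w
      have h1 : ∑ x ∈ C, P u a x * V x ≤ (∑ x ∈ C, P v a x) * V w := by
        rw [← hmass, Finset.sum_mul]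
        apply Finset.sum_le_sum
        intro x hx
        exact mul_le_mul_of_nonneg_left (hwmax x hx) ((hP u a).1 x)
      have h2 : (∑ x ∈ C, P v a x) * (V w - D) ≤ ∑ x ∈ C, P v a x * V x := by
        rw [Finset.sum_mul]
        apply Finset.sum_le_sum
        intro x hx
        have hle : V w - D ≤ V x := by
          have := (abs_le.mp (hDle w x (hmem x hx))).2
          linarith
        exact mul_le_mul_of_nonneg_left hle ((hP v a).1 x)
      have hring : (∑ x ∈ C, P v a x) * V w - (∑ x ∈ C, P v a x) * (V w - D)
          = D * ∑ x ∈ C, P v a x := by ring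
      linarith
    have hmass1 : ∑ q : Quotient st,
        ∑ x ∈ univ.filter (fun x => Quotient.mk st x = q), P v a x = 1 := by
      rw [hfib]
      exact (hP v a).2
    calc (∑ s', P u a s' * V s') - (∑ s', P v a s' * V s')
        = ∑ q : Quotient st,
            ((∑ x ∈ univ.filter (fun x => Quotient.mk st x = q), P u a x * V x)
            - (∑ x ∈ univ.filter (fun x => Quotient.mk st x = q), P v a x * V x)) := by
          rw [Finset.sum_sub_distrib, hfib, hfib]
      _ ≤ ∑ q : Quotient st,
            D * ∑ x ∈ univ.filter (fun x => Quotient.mk st x = q), P v a x :=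
          Finset.sum_le_sum (fun q _ => key q)
      _ = D * ∑ q : Quotient st,
            ∑ x ∈ univ.filter (fun x => Quotient.mk st x = q), P v a x := by
          rw [Finset.mul_sum]
      _ = D := by rw [hmass1, mul_one]
  have hcontr : ∀ u v, E u v → V u ≤ V v + γ * D := by
    intro u v huv
    rw [hV u]
    apply Finset.sup'_le
    intro a _
    have h1 : R v a + γ * ∑ s', P v a s' * V s' ≤ V v := by
      rw [hV v]
      exact Finset.le_sup' (fun a => R v a + γ * ∑ s', P v a s' * V s') (Finset.mem_univ a)
    have h2 := mul_le_mul_of_nonneg_left (hsum u v huv a) hγ0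
    rw [mul_sub] at h2
    have h3 : R u a = R v a := hR u v huv a
    linarith
  have hDγ : D ≤ γ * D := by
    rw [hD]
    apply Finset.sup'_le
    intro p _
    by_cases h : E p.1 p.2
    · rw [if_pos h, abs_sub_le_iff]
      have h1 := hcontr p.1 p.2 h
      have h2 := hcontr p.2 p.1 (hE.symm h)
      constructor <;> linarith
    · rw [if_neg h]
      positivity
  have hDneg : D ≤ 0 := by nlinarith
  have := hDle s₀ t₀ hst₀
  have habs : |V s₀ - V t₀| ≤ 0 := le_trans this hDneg
  have := abs_nonpos_iff.mp habs
  linarith [sub_eq_zero.mp this]
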